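/- arXiv:2307.09339 — 4 statements merged into one kernel-verified Lean document; each statement's English description precedes it below -/
import Mathlib

section
/- Let M_1 : X → PMF(Y) satisfy ε_1-local differential privacy, and let M_2 : X × Y → PMF(Z) be such that for every fixed y ∈ Y the mechanism x ↦ M_2(x, y) satisfies ε_2-local differential privacy. Then the adaptive composition x ↦ (M_1(x)).bind(y ↦ (M_2(x, y)).map(z ↦ (y, z))), which releases a first perturbed value y and then a second value z whose perturbation may depend on the already-released y, satisfies (ε_1 + ε_2)-local differential privacy on X. -/
/-- Adaptive composition of two LDP mechanisms. If `M₁` satisfies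
`ε₁`-LDP and, for every fixed already-released output `y`, `x ↦ M₂ x y` satisfies
`ε₂`-LDP, then the mechanism releasing the pair `(y, z)` satisfies `(ε₁ + ε₂)`-LDP. -/
theorem adaptive_composition_two_ldp
    {X Y Z : Type*} (M₁ : X → PMF Y) (M₂ : X → Y → PMF Z) (ε₁ ε₂ : ℝ)
    (hM₁ : ∀ (x x' : X) (y : Y),
      (M₁ x) y ≤ ENNReal.ofReal (Real.exp ε₁) * (M₁ x') y)
    (hM₂ : ∀ (y : Y) (x x' : X) (z : Z),
      (M₂ x y) z ≤ ENNReal.ofReal (Real.exp ε₂) * (M₂ x' y) z) :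
    ∀ (x x' : X) (p : Y × Z),
      ((M₁ x).bind (fun y => (M₂ x y).map (fun z => (y, z)))) p ≤
        ENNReal.ofReal (Real.exp (ε₁ + ε₂)) *
          ((M₁ x').bind (fun y => (M₂ x' y).map (fun z => (y, z)))) p := by
  classical
  intro x x' p
  simp only [PMF.bind_apply, PMF.map_apply]
  rw [Real.exp_add, ENNReal.ofReal_mul (Real.exp_nonneg _), ← ENNReal.tsum_mul_left]
  refine ENNReal.tsum_le_tsum fun y => ?_
  calc _
      ≤ (ENNReal.ofReal (Real.exp ε₁) * (M₁ x') y) *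
        (∑' z, if p = (y, z) then ENNReal.ofReal (Real.exp ε₂) * (M₂ x' y) z else 0) := by
        refine mul_le_mul' (hM₁ x x' y) (ENNReal.tsum_le_tsum fun z => ?_)
        split <;> simp [hM₂ y x x' z]
    _ = ENNReal.ofReal (Real.exp ε₁) * ENNReal.ofReal (Real.exp ε₂) *
        ((M₁ x') y * (∑' a, if p = (y, a) then (M₂ x' y) a else 0)) := by
        have : ∀ z : Z, (if p = (y, z) then ENNReal.ofReal (Real.exp ε₂) * (M₂ x' y) z else 0)
            = ENNReal.ofReal (Real.exp ε₂) * (if p = (y, z) then (M₂ x' y) z else 0) := by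
          intro z; split <;> simp
        simp_rw [this, ← ENNReal.tsum_mul_left]
        exact tsum_congr fun i => by ring
    _ ≤ _ := le_of_eq (by convert rfl)
end

section
/- Let X and R be finite nonempty sets, u : X × R → ℝ a utility function, Δu = max_{x, x' ∈ X, r ∈ R} |u(x, r) − u(x', r)| the sensitivity, with Δu > 0, and ε > 0. The exponential mechanism, which on input x outputs r ∈ R with probability exp(ε·u(x,r)/(2Δu)) / ∑_{r' ∈ R} exp(ε·u(x,r')/(2Δu)), satisfies ε-local differential privacy: for all x, x' ∈ X and all r ∈ R, the probability of output r on input x is at most e^ε times the probability of output r on input x'. -/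
/-- The exponential mechanism with utility `u`, sensitivity
`Δu = max_{x, x' ∈ X, r ∈ R} |u(x,r) − u(x',r)| > 0` and budget `ε > 0`
satisfies `ε`-LDP. -/
theorem exponential_mechanism_ldp
    {X R : Type*} [Fintype X] [Fintype R] [Nonempty X] [Nonempty R]
    (u : X → R → ℝ) (ε : ℝ) (hε : 0 < ε) (Δu : ℝ)
    (hΔdef : Δu = (Finset.univ (α := X × X × R)).sup'
      Finset.univ_nonempty (fun q => |u q.1 q.2.2 - u q.2.1 q.2.2|))
    (hΔpos : 0 < Δu) :
    ∀ (x x' : X) (r : R),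
      Real.exp (ε * u x r / (2 * Δu)) /
          (∑ r' : R, Real.exp (ε * u x r' / (2 * Δu))) ≤
        Real.exp ε *
          (Real.exp (ε * u x' r / (2 * Δu)) /
            (∑ r' : R, Real.exp (ε * u x' r' / (2 * Δu)))) := by
  intro x x' r
  -- sensitivity bound
  have hsens : ∀ (a b : X) (s : R), |u a s - u b s| ≤ Δu := by
    intro a b s
    rw [hΔdef]
    exact Finset.le_sup' (f := fun q : X × X × R => |u q.1 q.2.2 - u q.2.1 q.2.2|)
      (Finset.mem_univ (a, b, s))
  have hexp : ∀ (a b : X) (s : R),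
      Real.exp (ε * u a s / (2 * Δu)) ≤
        Real.exp (ε / 2) * Real.exp (ε * u b s / (2 * Δu)) := by
    intro a b s
    rw [← Real.exp_add]
    apply Real.exp_le_exp.2
    have h1 : u a s - u b s ≤ Δu := (abs_le.1 (hsens a b s)).2
    have : ε * u a s / (2 * Δu) - ε * u b s / (2 * Δu) ≤ ε / 2 := by
      rw [div_sub_div_same, ← mul_sub, div_le_div_iff₀ (by linarith) (by norm_num)]
      nlinarith
    linarith
  have hSpos : ∀ a : X, 0 < ∑ r' : R, Real.exp (ε * u a r' / (2 * Δu)) := by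
    intro a
    exact Finset.sum_pos (fun i _ => Real.exp_pos _) Finset.univ_nonempty
  have hSle : (∑ r' : R, Real.exp (ε * u x' r' / (2 * Δu))) ≤
      Real.exp (ε / 2) * ∑ r' : R, Real.exp (ε * u x r' / (2 * Δu)) := by
    rw [Finset.mul_sum]
    exact Finset.sum_le_sum fun i _ => hexp x' x i
  rw [mul_div_assoc', div_le_div_iff₀ (hSpos x) (hSpos x')]
  calc Real.exp (ε * u x r / (2 * Δu)) * ∑ r' : R, Real.exp (ε * u x' r' / (2 * Δu))
      ≤ (Real.exp (ε / 2) * Real.exp (ε * u x' r / (2 * Δu))) *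
        (Real.exp (ε / 2) * ∑ r' : R, Real.exp (ε * u x r' / (2 * Δu))) := by
        apply mul_le_mul (hexp x x' r) hSle (le_of_lt (hSpos x'))
        positivity
    _ = Real.exp ε * Real.exp (ε * u x' r / (2 * Δu)) *
        ∑ r' : R, Real.exp (ε * u x r' / (2 * Δu)) := by
        rw [mul_mul_mul_comm, ← Real.exp_add, add_halves, mul_assoc]
end

section
/- Let ε > 0 and b > 0, and define the square-wave density p(x, y) = e^ε/(2b·e^ε + 1) if |x − y| ≤ b and p(x, y) = 1/(2b·e^ε + 1) otherwise, for inputs x ∈ [0,1] and outputs y ∈ [−b, b+1]. Then for all x, x' ∈ [0,1] and all y ∈ [−b, b+1], p(x, y) ≤ e^ε · p(x', y); that is, the square-wave mechanism satisfies ε-local differential privacy. -/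
/-- The square-wave mechanism with budget `ε > 0` and half-width `b > 0`
satisfies `ε`-LDP: its output density at any `y ∈ [−b, b+1]` under input `x ∈ [0,1]`
is at most `e^ε` times its density under input `x' ∈ [0,1]`. -/
theorem square_wave_ldp (ε b : ℝ) (hε : 0 < ε) (hb : 0 < b) :
    ∀ x x' y : ℝ, x ∈ Set.Icc (0 : ℝ) 1 → x' ∈ Set.Icc (0 : ℝ) 1 →
      y ∈ Set.Icc (-b) (b + 1) →
      (if |x - y| ≤ b then Real.exp ε / (2 * b * Real.exp ε + 1)
        else 1 / (2 * b * Real.exp ε + 1)) ≤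
      Real.exp ε *
      (if |x' - y| ≤ b then Real.exp ε / (2 * b * Real.exp ε + 1)
        else 1 / (2 * b * Real.exp ε + 1)) := by
  intro x x' y _ _ _
  have hD : 0 < 2 * b * Real.exp ε + 1 := by positivity
  have he1 : 1 ≤ Real.exp ε := by
    have := Real.exp_pos ε
    nlinarith [Real.add_one_le_exp ε]
  split_ifs with h1 h2 h2 <;>
    rw [mul_div_assoc', div_le_div_iff₀ hD hD] <;>
    nlinarith [mul_nonneg (mul_nonneg (sub_nonneg.2 he1) (Real.exp_pos ε).le) hD.le,
      mul_nonneg (sub_nonneg.2 he1) hD.le]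
end

section
/- Let P be a finite nonempty set of points in a metric space with distance dist, p_α ∈ P, and let M be the exponential mechanism on P with utility u(p, r) = −dist(p, r), sensitivity Δu = max_{p, r, r' ∈ P} |u(p,r) − u(p,r')| > 0, and budget ε > 0. Let t > 0 and u_x ∈ ℝ, set R = 2tΔu/ε − u_x, assume R ≥ 0 and u_x ≤ u(p_α, p) for every p ∈ P with dist(p_α, p) ≤ R, and let C = {p ∈ P : dist(p_α, p) ≤ R}. Then, writing p̂_α = M(p_α), Pr[p_α ∉ C_τ(p̂_α, R)] = Pr[p̂_α ∉ C] ≤ (|P \ C| / |C|) · exp(−t); i.e., the probability that the true anchor point is not covered by the ball of radius R around the perturbed anchor decays exponentially in t. -/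
/-- With `R = 2tΔu/ε − u_x`, the probability that the true anchor point
`p_α` is not covered by the ball of radius `R` around the perturbed anchor
`p̂_α = M(p_α)` equals the probability that `p̂_α ∉ C` and is at most
`(|P \ C| / |C|) · exp(−t)`. -/
theorem exp_mechanism_anchor_coverage
    {α : Type*} [MetricSpace α] [DecidableEq α] (P : Finset α) (hP : P.Nonempty)
    (pα : α) (hpα : pα ∈ P) (ε : ℝ) (hε : 0 < ε) (Δu : ℝ)
    (hΔdef : Δu = (P ×ˢ P ×ˢ P).sup' (hP.product (hP.product hP))
      (fun q => |(-(dist q.1 q.2.1)) - (-(dist q.1 q.2.2))|))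
    (hΔpos : 0 < Δu)
    (t : ℝ) (ht : 0 < t) (ux : ℝ)
    (R : ℝ) (hRdef : R = 2 * t * Δu / ε - ux) (hR : 0 ≤ R)
    (hux : ∀ p ∈ P, dist pα p ≤ R → ux ≤ -(dist pα p))
    (C : Finset α) (hC : C = P.filter (fun p => dist pα p ≤ R)) :
    -- `Pr[p_α ∉ C_τ(p̂_α, R)] = Pr[p̂_α ∉ C]`
    (∑ r ∈ P.filter (fun r => ¬ dist r pα ≤ R),
        Real.exp (ε * (-(dist pα r)) / (2 * Δu))) /
        (∑ r' ∈ P, Real.exp (ε * (-(dist pα r')) / (2 * Δu))) =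
      (∑ r ∈ P \ C, Real.exp (ε * (-(dist pα r)) / (2 * Δu))) /
        (∑ r' ∈ P, Real.exp (ε * (-(dist pα r')) / (2 * Δu))) ∧
    -- `Pr[p̂_α ∉ C] ≤ (|P \ C| / |C|) · exp(−t)`
    (∑ r ∈ P \ C, Real.exp (ε * (-(dist pα r)) / (2 * Δu))) /
        (∑ r' ∈ P, Real.exp (ε * (-(dist pα r')) / (2 * Δu))) ≤
      ((P \ C).card : ℝ) / (C.card : ℝ) * Real.exp (-t) := by
  have hfilter : P.filter (fun r => ¬ dist r pα ≤ R) = P \ C := by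
    subst hC
    ext x
    simp only [Finset.mem_filter, Finset.mem_sdiff, dist_comm x pα]
    tauto
  refine ⟨by rw [hfilter], ?_⟩
  set f : α → ℝ := fun r => Real.exp (ε * (-(dist pα r)) / (2 * Δu)) with hf
  have hpC : pα ∈ C := by
    subst hC; exact Finset.mem_filter.2 ⟨hpα, by simpa using hR⟩
  have hCcard : (0 : ℝ) < C.card := by
    exact_mod_cast Finset.card_pos.2 ⟨pα, hpC⟩
  set E : ℝ := Real.exp (ε * ux / (2 * Δu)) with hE
  have hEpos : 0 < E := Real.exp_pos _
  have hden : (C.card : ℝ) * E ≤ ∑ r' ∈ P, f r' := by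
    calc (C.card : ℝ) * E = ∑ _r ∈ C, E := by rw [Finset.sum_const, nsmul_eq_mul]
    _ ≤ ∑ r ∈ C, f r := by
        refine Finset.sum_le_sum fun p hp => ?_
        have hp' := hp
        rw [hC, Finset.mem_filter] at hp'
        have h1 : ux ≤ -(dist pα p) := hux p hp'.1 hp'.2
        exact Real.exp_le_exp.2 (by
          apply div_le_div_of_nonneg_right _ (by linarith)
          · nlinarith)
    _ ≤ ∑ r' ∈ P, f r' := by
        refine Finset.sum_le_sum_of_subset_of_nonneg ?_ (fun i _ _ => (Real.exp_pos _).le)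
        rw [hC]; exact Finset.filter_subset _ _
  have hnum : (∑ r ∈ P \ C, f r) ≤ ((P \ C).card : ℝ) * E * Real.exp (-t) := by
    have : ((P \ C).card : ℝ) * E * Real.exp (-t) = ∑ _r ∈ P \ C, E * Real.exp (-t) := by
      rw [Finset.sum_const, nsmul_eq_mul]; ring
    rw [this]
    refine Finset.sum_le_sum fun p hp => ?_
    have hp' := Finset.mem_sdiff.1 hp
    have hnotle : ¬ dist pα p ≤ R := by
      intro h; exact hp'.2 (hC ▸ Finset.mem_filter.2 ⟨hp'.1, h⟩)
    have hgt : R < dist pα p := lt_of_not_ge hnotle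
    rw [hE, ← Real.exp_add]
    refine Real.exp_le_exp.2 ?_
    have h2 : ε * (2 * t * Δu / ε) / (2 * Δu) = t := by
      field_simp
    have : ε * (-(dist pα p)) / (2 * Δu) ≤ ε * (-R) / (2 * Δu) := by
      apply div_le_div_of_nonneg_right _ (by linarith)
      nlinarith
    calc ε * (-(dist pα p)) / (2 * Δu) ≤ ε * (-R) / (2 * Δu) := this
      _ = ε * ux / (2 * Δu) + -t := by
          rw [hRdef]
          field_simp
          ring
  have hSpos : 0 < ∑ r' ∈ P, f r' := lt_of_lt_of_le (by positivity) hden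
  calc (∑ r ∈ P \ C, f r) / (∑ r' ∈ P, f r')
      ≤ (((P \ C).card : ℝ) * E * Real.exp (-t)) / ((C.card : ℝ) * E) := by
        apply div_le_div₀ (by positivity) hnum (by positivity) hden
    _ = ((P \ C).card : ℝ) / (C.card : ℝ) * Real.exp (-t) := by
        field_simp
end
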